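/- For every n ≥ 1 and every k with 1 ≤ k ≤ n−1, the binomial coefficient satisfies C(n,k) ≤ sqrt(n/(2π k (n−k))) · 2^{n H₂(k/n)}. -/

import Mathlib

open Stirling

lemma sqrtpi_le_stirling (m : ℕ) (hm : 1 ≤ m) : Real.sqrt Real.pi ≤ stirlingSeq m := by
  obtain ⟨m, rfl⟩ := Nat.exists_eq_add_of_le hm
  have h1 : Filter.Tendsto (stirlingSeq ∘ Nat.succ) Filter.atTop (nhds (Real.sqrt Real.pi)) :=
    (Filter.tendsto_add_atTop_iff_nat 1).mpr tendsto_stirlingSeq_sqrt_pi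
  have := stirlingSeq'_antitone.le_of_tendsto h1 m
  simpa [Nat.add_comm] using this

lemma stirling_anti {i j : ℕ} (hi : 1 ≤ i) (hij : i ≤ j) : stirlingSeq j ≤ stirlingSeq i := by
  obtain ⟨i, rfl⟩ := Nat.exists_eq_add_of_le hi
  obtain ⟨d, rfl⟩ := Nat.exists_eq_add_of_le hij
  have := stirlingSeq'_antitone (Nat.le_add_right i d)
  simpa [Nat.succ_eq_add_one, Nat.add_comm, Nat.add_assoc, Nat.add_left_comm] using this

lemma fac_eq (m : ℕ) (hm : 1 ≤ m) :
    (m.factorial : ℝ) = stirlingSeq m * (Real.sqrt (2 * m) * ((m : ℝ) / Real.exp 1) ^ m) := by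
  have hm0 : (0 : ℝ) < m := by exact_mod_cast hm
  have hd : Real.sqrt (2 * m) * ((m : ℝ) / Real.exp 1) ^ m ≠ 0 := by positivity
  rw [stirlingSeq]
  field_simp

noncomputable def binEntropy (x : ℝ) : ℝ :=
  -x * Real.logb 2 x - (1 - x) * Real.logb 2 (1 - x)

theorem binom_upper_entropy (n k : ℕ) (hn : 1 ≤ n) (hk : 1 ≤ k) (hkn : k ≤ n - 1) :
    (n.choose k : ℝ) ≤
      Real.sqrt ((n : ℝ) / (2 * Real.pi * k * (n - k))) *
        (2 : ℝ) ^ ((n : ℝ) * binEntropy ((k : ℝ) / n)) := by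
  set b : ℕ := n - k with hbdef
  have hkn' : k ≤ n := hkn.trans (Nat.sub_le n 1)
  have hb : 1 ≤ b := by omega
  have hkb : k + b = n := by omega
  set K : ℝ := (k : ℝ) with hK
  set B : ℝ := (b : ℝ) with hB
  set N : ℝ := (n : ℝ) with hN
  have hKB : K + B = N := by rw [hK, hB, hN]; exact_mod_cast congrArg Nat.cast hkb
  have hK0 : (0:ℝ) < K := by rw [hK]; exact_mod_cast Nat.lt_of_lt_of_le Nat.zero_lt_one hk
  have hB0 : (0:ℝ) < B := by rw [hB]; exact_mod_cast Nat.lt_of_lt_of_le Nat.zero_lt_one hb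
  have hN0 : (0:ℝ) < N := by rw [hN]; exact_mod_cast Nat.lt_of_lt_of_le Nat.zero_lt_one hn
  have hNK : N - K = B := by linarith
  -- identify the rpow term
  have hent : N * binEntropy (K / N) = Real.logb 2 (N ^ n / (K ^ k * B ^ b)) := by
    have h1 : (1 : ℝ) - K / N = B / N := by field_simp; linarith
    rw [binEntropy, h1, Real.logb_div hK0.ne' hN0.ne', Real.logb_div hB0.ne' hN0.ne',
      Real.logb_div (by positivity) (by positivity),
      Real.logb_mul (by positivity) (by positivity),
      Real.logb_pow, Real.logb_pow, Real.logb_pow]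
    field_simp
    rw [← hN, ← hK, ← hB, ← hKB]
    ring
  have h2 : (2 : ℝ) ^ (N * binEntropy (K / N)) = N ^ n / (K ^ k * B ^ b) := by
    rw [hent, Real.rpow_logb two_pos (by norm_num) (by positivity)]
  -- choose as factorial ratio
  have hch : (n.choose k : ℝ) = (n.factorial : ℝ) / ((k.factorial : ℝ) * (b.factorial : ℝ)) := by
    rw [eq_div_iff (by positivity)]
    exact_mod_cast (mul_assoc (n.choose k) (k.factorial) (b.factorial)).symm.trans
      (Nat.choose_mul_factorial_mul_factorial hkn')
  set sn := stirlingSeq n with hsn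
  set sk := stirlingSeq k with hsk
  set sb := stirlingSeq b with hsb
  have hpi : (0:ℝ) < Real.sqrt Real.pi := Real.sqrt_pos.mpr Real.pi_pos
  have hsk0 : 0 < sk := lt_of_lt_of_le hpi (sqrtpi_le_stirling k hk)
  have hsb1 : Real.sqrt Real.pi ≤ sb := sqrtpi_le_stirling b hb
  have hsb0 : 0 < sb := lt_of_lt_of_le hpi hsb1
  have he : (0:ℝ) < Real.exp 1 := Real.exp_pos 1
  -- express choose via stirlingSeq
  have hchoose2 : (n.choose k : ℝ) =
      (sn / (sk * sb)) * (Real.sqrt (N / (2 * K * B)) * (N ^ n / (K ^ k * B ^ b))) := by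
    rw [hch, fac_eq n hn, fac_eq k hk, fac_eq b hb]
    have hs2N : Real.sqrt (2 * N) =
        Real.sqrt (N / (2 * K * B)) * (Real.sqrt (2*K) * Real.sqrt (2*B)) := by
      rw [← Real.sqrt_mul (by positivity), ← Real.sqrt_mul (by positivity)]
      congr 1
      field_simp
    have hepow : Real.exp 1 ^ n = Real.exp 1 ^ k * Real.exp 1 ^ b := by
      rw [← pow_add, hkb]
    have h2K : Real.sqrt (2*K) ≠ 0 := by positivity
    have h2B : Real.sqrt (2*B) ≠ 0 := by positivity
    have hq : Real.sqrt (N / (2 * K * B)) ≠ 0 := by positivity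
    rw [div_pow, div_pow, div_pow, hs2N, hepow]
    have hek : Real.exp 1 ^ k ≠ 0 := by positivity
    have heb : Real.exp 1 ^ b ≠ 0 := by positivity
    have hKk : K ^ k ≠ 0 := by positivity
    have hBb : B ^ b ≠ 0 := by positivity
    field_simp
    rw [← hsn, ← hsk, ← hsb, ← hN, ← hK, ← hB]
    field_simp
  rw [hchoose2, h2, hNK]
  have hrhs : Real.sqrt (N / (2 * Real.pi * K * B)) =
      (1 / Real.sqrt Real.pi) * Real.sqrt (N / (2 * K * B)) := by
    have hq : N / (2 * Real.pi * K * B) = (N / (2 * K * B)) / Real.pi := by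
      rw [div_div]; congr 1; ring
    rw [hq, Real.sqrt_div (by positivity)]
    ring
  have hfac : sn / (sk * sb) ≤ 1 / Real.sqrt Real.pi := by
    have h1 : sn ≤ sk := stirling_anti hk hkn'
    have h2' : sn / (sk * sb) = (sn / sk) * (1 / sb) := by ring
    rw [h2']
    have h3 : sn / sk ≤ 1 := (div_le_one hsk0).mpr h1
    have h4 : (1:ℝ) / sb ≤ 1 / Real.sqrt Real.pi := one_div_le_one_div_of_le hpi hsb1
    have h5 : (0:ℝ) ≤ 1 / sb := by positivity
    calc sn / sk * (1 / sb) ≤ 1 * (1 / sb) := mul_le_mul_of_nonneg_right h3 h5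
      _ = 1 / sb := by ring
      _ ≤ 1 / Real.sqrt Real.pi := h4
  calc sn / (sk * sb) * (Real.sqrt (N / (2 * K * B)) * (N ^ n / (K ^ k * B ^ b)))
      ≤ 1 / Real.sqrt Real.pi * (Real.sqrt (N / (2 * K * B)) * (N ^ n / (K ^ k * B ^ b))) :=
        mul_le_mul_of_nonneg_right hfac (by positivity)
    _ = Real.sqrt (N / (2 * Real.pi * K * B)) * (N ^ n / (K ^ k * B ^ b)) := by
        rw [hrhs]; ring
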